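/- arXiv:1306.5255 — 3 statements merged into one kernel-verified Lean document; each statement's English description precedes it below -/
import Mathlib

section
/- Let A ⊆ C be an alcove and let H be a wall of A that is not a wall of the chamber C. Let B be an alcove and let v ∈ closure(B). If A and the base alcove A₀ lie in the same open half-space determined by H, and v ∈ closure(−C), then B lies in the same open half-space of H as A. -/
open RealInnerProductSpace

/-- A finite, reduced, irreducible, crystallographic root system spanning `V`,
together with a regular vector `ξ` determining the positive system. -/
structure RootSystemData (V : Type*) [NormedAddCommGroup V] [InnerProductSpace ℝ V] where
  Φ : Set V
  ξ : V
  finite : Φ.Finite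
  nonzero : ∀ α ∈ Φ, α ≠ 0
  reduced : ∀ α ∈ Φ, ∀ c : ℝ, c • α ∈ Φ → c = 1 ∨ c = -1
  crystallographic : ∀ α ∈ Φ, ∀ β ∈ Φ, ∃ n : ℤ, 2 * ⟪β, α⟫ / ⟪α, α⟫ = (n : ℝ)
  reflect_mem : ∀ α ∈ Φ, ∀ β ∈ Φ, β - (2 * ⟪β, α⟫ / ⟪α, α⟫) • α ∈ Φ
  spans : Submodule.span ℝ Φ = ⊤
  irreducible : ∀ Φ₁ Φ₂ : Set V, Φ = Φ₁ ∪ Φ₂ →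
    (∀ a ∈ Φ₁, ∀ b ∈ Φ₂, ⟪a, b⟫ = (0 : ℝ)) → Φ₁ = ∅ ∨ Φ₂ = ∅
  regular : ∀ α ∈ Φ, ⟪ξ, α⟫ ≠ (0 : ℝ)

/-- The affine orthogonal reflection of `V` fixing the hyperplane `{x | ⟪x, α⟫ = k}` pointwise. -/
noncomputable def reflPt {V : Type*} [NormedAddCommGroup V] [InnerProductSpace ℝ V]
    (α : V) (k : ℝ) (x : V) : V := x - ((⟪x, α⟫ - k) * (2 / ⟪α, α⟫)) • α

namespace RootSystemData

variable {V : Type*} [NormedAddCommGroup V] [InnerProductSpace ℝ V]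

/-- The positive system `Φ⁺` determined by `ξ`. -/
def pos (R : RootSystemData V) : Set V := {α | α ∈ R.Φ ∧ 0 < ⟪R.ξ, α⟫}

/-- The open dominant Weyl chamber `C`. -/
def chamber (R : RootSystemData V) : Set V := {x | ∀ α ∈ R.pos, 0 < ⟪x, α⟫}

/-- The opposite chamber `−C`. -/
def antiChamber (R : RootSystemData V) : Set V := {x | -x ∈ R.chamber}

/-- The affine root hyperplane `H_{α,k}`. -/
def hyp (R : RootSystemData V) (α : V) (k : ℤ) : Set V := {x | ⟪x, α⟫ = (k : ℝ)}

/-- `H` is an affine root hyperplane. -/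
def IsHyp (R : RootSystemData V) (H : Set V) : Prop := ∃ α ∈ R.Φ, ∃ k : ℤ, H = R.hyp α k

/-- The union of all affine root hyperplanes. -/
def hypUnion (R : RootSystemData V) : Set V := {x | ∃ α ∈ R.Φ, ∃ k : ℤ, ⟪x, α⟫ = (k : ℝ)}

/-- An alcove: a connected component of the complement of the union of the affine root
hyperplanes. -/
def IsAlcove (R : RootSystemData V) (A : Set V) : Prop :=
  ∃ x ∈ R.hypUnionᶜ, A = connectedComponentIn R.hypUnionᶜ x

/-- The base alcove `A₀`. -/
def baseAlcove (R : RootSystemData V) : Set V :=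
  {x | ∀ α ∈ R.pos, 0 < ⟪x, α⟫ ∧ ⟪x, α⟫ < 1}

/-- The sets `A` and `B` lie in the same open half-space determined by the affine root
hyperplane `H`. -/
def SameSide (R : RootSystemData V) (H A B : Set V) : Prop :=
  ∃ α ∈ R.Φ, ∃ k : ℤ, H = R.hyp α k ∧
    ((∀ x ∈ A ∪ B, ⟪x, α⟫ < (k : ℝ)) ∨ (∀ x ∈ A ∪ B, (k : ℝ) < ⟪x, α⟫))

/-- The affine root hyperplane `H` separates `A` and `B`: they lie in the two different open
half-spaces determined by `H`. -/
def Separates (R : RootSystemData V) (H A B : Set V) : Prop :=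
  ∃ α ∈ R.Φ, ∃ k : ℤ, H = R.hyp α k ∧
    (((∀ x ∈ A, ⟪x, α⟫ < (k : ℝ)) ∧ (∀ x ∈ B, (k : ℝ) < ⟪x, α⟫)) ∨
     ((∀ x ∈ B, ⟪x, α⟫ < (k : ℝ)) ∧ (∀ x ∈ A, (k : ℝ) < ⟪x, α⟫)))

/-- `d(A, B)`: the number of affine root hyperplanes separating `A` from `B`. -/
noncomputable def dist (R : RootSystemData V) (A B : Set V) : ℕ :=
  {H : Set V | R.IsHyp H ∧ R.Separates H A B}.ncard

/-- Two alcoves are adjacent. -/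
def Adjacent (R : RootSystemData V) (A B : Set V) : Prop := A ≠ B ∧ R.dist A B = 1

/-- `H` is a wall of the alcove `A`: it is an affine root hyperplane with
`d(A, r_H(A)) = 1`. -/
def IsWall (R : RootSystemData V) (H A : Set V) : Prop :=
  ∃ α ∈ R.Φ, ∃ k : ℤ, H = R.hyp α k ∧ R.dist A (reflPt α (k : ℝ) '' A) = 1

/-- `H` is a wall of the dominant chamber `C`: `H ∩ C = ∅` and `H ∩ closure C` affinely
spans `H`. -/
def IsChamberWall (R : RootSystemData V) (H : Set V) : Prop :=
  R.IsHyp H ∧ H ∩ R.chamber = ∅ ∧ affineSpan ℝ (H ∩ closure R.chamber) = affineSpan ℝ H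

/-- A special point of `V`. -/
def IsSpecial (R : RootSystemData V) (v : V) : Prop := ∀ α ∈ R.Φ, ∃ n : ℤ, ⟪v, α⟫ = (n : ℝ)

/-- The finite Weyl group `W₀`: the group of linear isometries of `V` generated by the
reflections in the hyperplanes `H_{α,0}`, `α ∈ Φ`. -/
def W0 (R : RootSystemData V) : Subgroup (V ≃ₗᵢ[ℝ] V) :=
  Subgroup.closure {f | ∃ α ∈ R.Φ, ∀ x, f x = reflPt α 0 x}

/-- A finite gallery `(Bs 0, …, Bs n)`: consecutive alcoves are adjacent. -/
def IsGallery (R : RootSystemData V) (Bs : ℕ → Set V) (n : ℕ) : Prop :=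
  (∀ i ≤ n, R.IsAlcove (Bs i)) ∧ ∀ i < n, R.Adjacent (Bs i) (Bs (i + 1))

/-- The Umbrella property for a gallery `(Bs 0, …, Bs n)`, an alcove `A` and a wall `H`
of `A`: every alcove of the gallery is on the same side of `H` as `A`, and the gallery can
be extended to a minimal gallery from `Bs 0` to `A`. -/
def Umbrella (R : RootSystemData V) (Bs : ℕ → Set V) (n : ℕ) (A H : Set V) : Prop :=
  R.IsWall H A ∧ (∀ i ≤ n, R.SameSide H (Bs i) A) ∧
    ∃ m, n ≤ m ∧ ∃ Cs : ℕ → Set V, (∀ i ≤ n, Cs i = Bs i) ∧ Cs m = A ∧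
      R.IsGallery Cs m ∧ R.dist (Cs 0) (Cs m) = m

/-- The length of an invertible affine transformation: `ℓ(g) = d(A₀, g(A₀))`. -/
noncomputable def len (R : RootSystemData V) (g : V ≃ᵃ[ℝ] V) : ℕ :=
  R.dist R.baseAlcove (⇑g '' R.baseAlcove)

/-- `g` is a translation of `V`. -/
def IsTranslation (g : V ≃ᵃ[ℝ] V) : Prop := ∃ v : V, ∀ x, g x = x + v

/-- `s ∈ S_aff`: `s` is the reflection in an affine root hyperplane which is a wall of the
base alcove `A₀`. -/
def IsSimpleRefl (R : RootSystemData V) (s : V ≃ᵃ[ℝ] V) : Prop :=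
  ∃ α ∈ R.Φ, ∃ k : ℤ, R.IsWall (R.hyp α k) R.baseAlcove ∧ ∀ x, s x = reflPt α (k : ℝ) x

end RootSystemData

/-- The sequence of iterated conjugates `g, s₁gs₁, s₂s₁gs₁s₂, …`. -/
noncomputable def conjSeq {V : Type*} [NormedAddCommGroup V] [InnerProductSpace ℝ V]
    (g : V ≃ᵃ[ℝ] V) (ss : ℕ → V ≃ᵃ[ℝ] V) : ℕ → V ≃ᵃ[ℝ] V
  | 0 => g
  | n + 1 => ss n * conjSeq g ss n * ss n

namespace RootSystemData

variable {V : Type*} [NormedAddCommGroup V] [InnerProductSpace ℝ V]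

/-- The Diamond Property for `g`: a sequence of length-preserving conjugations by simple
reflections leads to an element `g′` admitting a simple reflection `s` with
`ℓ(sg′) > ℓ(g′)`, `ℓ(g′s) > ℓ(g′)` and `sg′s ≠ g′`. -/
def DiamondProperty (R : RootSystemData V) (g : V ≃ᵃ[ℝ] V) : Prop :=
  ∃ (n : ℕ) (ss : ℕ → V ≃ᵃ[ℝ] V), (∀ i < n, R.IsSimpleRefl (ss i)) ∧
    (∀ i < n, R.len (conjSeq g ss (i + 1)) = R.len g) ∧
    ∃ s : V ≃ᵃ[ℝ] V, R.IsSimpleRefl s ∧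
      R.len (s * conjSeq g ss n) > R.len (conjSeq g ss n) ∧
      R.len (conjSeq g ss n * s) > R.len (conjSeq g ss n) ∧
      s * conjSeq g ss n * s ≠ conjSeq g ss n

end RootSystemData


section Auxiliary

namespace RootSystemData

variable {V : Type*} [NormedAddCommGroup V] [InnerProductSpace ℝ V]

lemma inner_reflPt (α : V) (k : ℝ) (x β : V) :
    ⟪reflPt α k x, β⟫ = ⟪x, β⟫ - ((⟪x, α⟫ - k) * (2 / ⟪α, α⟫)) * ⟪α, β⟫ := by
  simp [reflPt, inner_sub_left, real_inner_smul_left]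

lemma reflPt_neg (α : V) (k : ℝ) (x : V) : reflPt (-α) (-k) x = reflPt α k x := by
  unfold reflPt
  rw [inner_neg_neg, inner_neg_right, smul_neg, sub_neg_eq_add]
  conv_rhs => rw [sub_eq_add_neg, ← neg_smul]
  congr 1
  ring

lemma inner_reflPt_self {α : V} (haa : ⟪α, α⟫ ≠ (0:ℝ)) (k : ℝ) (x : V) :
    ⟪reflPt α k x, α⟫ = 2 * k - ⟪x, α⟫ := by
  rw [inner_reflPt]
  field_simp
  ring

lemma inner_self_ne_zero' (R : RootSystemData V) {α : V} (hα : α ∈ R.Φ) : ⟪α, α⟫ ≠ (0:ℝ) :=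
  fun h => R.nonzero α hα (inner_self_eq_zero.mp h)

lemma neg_mem (R : RootSystemData V) {α : V} (hα : α ∈ R.Φ) : -α ∈ R.Φ := by
  have h := R.reflect_mem α hα α hα
  have haa := R.inner_self_ne_zero' hα
  have h2 : 2 * ⟪α, α⟫ / ⟪α, α⟫ = (2:ℝ) := by field_simp
  rw [h2] at h
  have : α - (2:ℝ) • α = -α := by
    rw [two_smul]; abel
  rwa [this] at h

lemma hyp_neg (R : RootSystemData V) (α : V) (k : ℤ) : R.hyp (-α) (-k) = R.hyp α k := by
  ext x
  simp only [hyp, Set.mem_setOf_eq, inner_neg_right, Int.cast_neg]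
  constructor <;> intro h <;> linarith

lemma isOpen_hypUnion_compl (R : RootSystemData V) : IsOpen R.hypUnionᶜ := by
  rw [isOpen_compl_iff]
  have : R.hypUnion = ⋃ α ∈ R.Φ, (fun x : V => ⟪x, α⟫) ⁻¹' (Set.range ((↑) : ℤ → ℝ)) := by
    ext x
    simp only [hypUnion, Set.mem_setOf_eq, Set.mem_iUnion, Set.mem_preimage, Set.mem_range]
    constructor
    · rintro ⟨α, hα, k, hk⟩; exact ⟨α, hα, k, hk.symm⟩
    · rintro ⟨α, hα, k, hk⟩; exact ⟨α, hα, k, hk.symm⟩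
  rw [this]
  exact R.finite.isClosed_biUnion fun α _ =>
    Int.isClosedEmbedding_coe_real.isClosed_range.preimage (continuous_id.inner continuous_const)

lemma IsAlcove.subset {R : RootSystemData V} {A : Set V} (hA : R.IsAlcove A) :
    A ⊆ R.hypUnionᶜ := by
  obtain ⟨x, _, rfl⟩ := hA
  exact connectedComponentIn_subset _ _

lemma IsAlcove.nonempty {R : RootSystemData V} {A : Set V} (hA : R.IsAlcove A) :
    A.Nonempty := by
  obtain ⟨x, hx, rfl⟩ := hA
  exact ⟨x, mem_connectedComponentIn hx⟩

lemma IsAlcove.preconnected {R : RootSystemData V} {A : Set V} (hA : R.IsAlcove A) :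
    IsPreconnected A := by
  obtain ⟨x, _, rfl⟩ := hA
  exact isPreconnected_connectedComponentIn

lemma IsAlcove.isOpen {R : RootSystemData V} {A : Set V} (hA : R.IsAlcove A) :
    IsOpen A := by
  obtain ⟨x, _, rfl⟩ := hA
  exact R.isOpen_hypUnion_compl.connectedComponentIn

/-- The strip lemma: a preconnected set avoiding all hyperplanes lies strictly between two
consecutive integral hyperplanes for each root. -/
lemma strip (R : RootSystemData V) {S : Set V} (hS : IsPreconnected S)
    (hsub : S ⊆ R.hypUnionᶜ) {x₀ : V} (hx₀ : x₀ ∈ S) {β : V} (hβ : β ∈ R.Φ) :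
    ∃ m : ℤ, ∀ x ∈ S, (m : ℝ) < ⟪x, β⟫ ∧ ⟪x, β⟫ < (m : ℝ) + 1 := by
  have hfc : Continuous fun x : V => ⟪x, β⟫ := continuous_id.inner continuous_const
  have himg : IsPreconnected ((fun x : V => ⟪x, β⟫) '' S) := hS.image _ hfc.continuousOn
  have hoc := himg.ordConnected
  have hni : ∀ x ∈ S, ∀ n : ℤ, ⟪x, β⟫ ≠ (n : ℝ) := fun x hx n h => hsub hx ⟨β, hβ, n, h⟩
  have hint : ∀ n : ℤ, ∀ x ∈ S, ∀ y ∈ S, ⟪x, β⟫ ≤ (n : ℝ) → (n : ℝ) ≤ ⟪y, β⟫ → False := by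
    intro n x hx y hy h1 h2
    obtain ⟨z, hz, hz'⟩ :=
      hoc.out (Set.mem_image_of_mem _ hx) (Set.mem_image_of_mem _ hy) ⟨h1, h2⟩
    exact hni z hz n hz'
  refine ⟨⌊⟪x₀, β⟫⌋, fun x hx => ?_⟩
  have hfl : (⌊⟪x₀, β⟫⌋ : ℝ) < ⟪x₀, β⟫ :=
    lt_of_le_of_ne (Int.floor_le _) fun h => hni x₀ hx₀ _ h.symm
  have hfu : ⟪x₀, β⟫ < (⌊⟪x₀, β⟫⌋ : ℝ) + 1 := Int.lt_floor_add_one _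
  constructor
  · by_contra h
    push_neg at h
    exact hint ⌊⟪x₀, β⟫⌋ x hx x₀ hx₀ h hfl.le
  · by_contra h
    push_neg at h
    refine hint (⌊⟪x₀, β⟫⌋ + 1) x₀ hx₀ x hx (by push_cast; exact hfu.le) (by push_cast; exact h)

/-- Two equal affine root hyperplanes have (almost) equal data. -/
lemma hyp_eq_hyp (R : RootSystemData V) {α β : V} (hα : α ∈ R.Φ) (hβ : β ∈ R.Φ)
    {k j : ℤ} (h : R.hyp β j = R.hyp α k) : (β = α ∧ j = k) ∨ (β = -α ∧ j = -k) := by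
  have haa := R.inner_self_ne_zero' hα
  set p : V := ((k : ℝ) / ⟪α, α⟫) • α with hp
  have hpα : ⟪p, α⟫ = (k : ℝ) := by
    rw [hp, real_inner_smul_left, div_mul_cancel₀ _ haa]
  have hpβ : ⟪p, β⟫ = (j : ℝ) := by
    have : p ∈ R.hyp β j := by rw [h]; exact hpα
    exact this
  have hker : ∀ w : V, ⟪w, α⟫ = 0 → ⟪w, β⟫ = 0 := by
    intro w hw
    have h1 : p + w ∈ R.hyp α k := by
      show ⟪p + w, α⟫ = (k : ℝ)
      rw [inner_add_left, hpα, hw, add_zero]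
    rw [← h] at h1
    have h2 : ⟪p + w, β⟫ = (j : ℝ) := h1
    rw [inner_add_left, hpβ] at h2
    linarith
  set c : ℝ := ⟪β, α⟫ / ⟪α, α⟫ with hc
  have hwα : ⟪β - c • α, α⟫ = 0 := by
    rw [inner_sub_left, real_inner_smul_left, hc, div_mul_cancel₀ _ haa, sub_self]
  have hwβ := hker _ hwα
  have hww : ⟪β - c • α, β - c • α⟫ = (0:ℝ) := by
    rw [inner_sub_right, real_inner_smul_right, hwβ, hwα, mul_zero, sub_zero]
  have hw0 : β - c • α = 0 := inner_self_eq_zero.mp hww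
  have hβc : β = c • α := by
    have := sub_eq_zero.mp hw0; exact this
  rcases R.reduced α hα c (hβc ▸ hβ) with h1 | h1
  · left
    rw [h1, one_smul] at hβc
    refine ⟨hβc, ?_⟩
    have : (j : ℝ) = (k : ℝ) := by rw [← hpβ, hβc, hpα]
    exact_mod_cast this
  · right
    rw [h1, neg_one_smul] at hβc
    refine ⟨hβc, ?_⟩
    have : (j : ℝ) = -(k : ℝ) := by rw [← hpβ, hβc, inner_neg_right, hpα]
    rw [show -(k:ℝ) = ((-k : ℤ) : ℝ) by push_cast; ring] at this
    exact_mod_cast this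

lemma hyp_inj (R : RootSystemData V) {α : V} (hα : α ∈ R.Φ) {k j : ℤ}
    (h : R.hyp α j = R.hyp α k) : j = k := by
  rcases R.hyp_eq_hyp hα hα h with ⟨_, hjk⟩ | ⟨hαα, _⟩
  · exact hjk
  · exfalso
    have h3 : α + α = 0 := by nth_rewrite 1 [hαα]; simp
    have h4 : (2:ℝ) • α = 0 := by rw [two_smul]; exact h3
    rcases smul_eq_zero.mp h4 with h5 | h5
    · norm_num at h5
    · exact R.nonzero α hα h5

/-- Transfer a `SameSide` statement to a fixed normal vector. -/
lemma sameSide_transfer (R : RootSystemData V) {α : V} (hα : α ∈ R.Φ) (k : ℤ) {S T : Set V}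
    (h : R.SameSide (R.hyp α k) S T) :
    (∀ x ∈ S ∪ T, ⟪x, α⟫ < (k : ℝ)) ∨ (∀ x ∈ S ∪ T, (k : ℝ) < ⟪x, α⟫) := by
  obtain ⟨β, hβ, j, hHj, hbr⟩ := h
  rcases R.hyp_eq_hyp hα hβ hHj.symm with ⟨hβα, hjk⟩ | ⟨hβα, hjk⟩
  · subst hβα; subst hjk; exact hbr
  · subst hβα; subst hjk
    rcases hbr with h1 | h1
    · right
      intro x hx
      have := h1 x hx
      rw [inner_neg_right, Int.cast_neg] at this
      linarith
    · left
      intro x hx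
      have := h1 x hx
      rw [inner_neg_right, Int.cast_neg] at this
      linarith

lemma reflPt_image_subset (R : RootSystemData V) {α : V} (hα : α ∈ R.Φ) (k : ℤ) {A : Set V}
    (hsub : A ⊆ R.hypUnionᶜ) : reflPt α (k : ℝ) '' A ⊆ R.hypUnionᶜ := by
  rintro _ ⟨x, hx, rfl⟩ ⟨β, hβ, j, hj⟩
  have haa := R.inner_self_ne_zero' hα
  obtain ⟨n, hn⟩ := R.crystallographic α hα β hβ
  have hσ : β - (2 * ⟪β, α⟫ / ⟪α, α⟫) • α ∈ R.Φ := R.reflect_mem α hα β hβ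
  have hval : ⟪x, β - (2 * ⟪β, α⟫ / ⟪α, α⟫) • α⟫ = ((j - k * n : ℤ) : ℝ) := by
    rw [inner_sub_right, real_inner_smul_right]
    rw [inner_reflPt] at hj
    push_cast
    rw [← hn, real_inner_comm α β]
    linear_combination hj
  exact hsub hx ⟨_, hσ, _, hval⟩

lemma antiChamber_closure_nonpos (R : RootSystemData V) {α : V} (hα : α ∈ R.Φ)
    (hαpos : 0 < ⟪R.ξ, α⟫) {v : V} (hv : v ∈ closure R.antiChamber) : ⟪v, α⟫ ≤ 0 := by
  have hcl : IsClosed {x : V | ⟪x, α⟫ ≤ 0} :=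
    isClosed_le (continuous_id.inner continuous_const) continuous_const
  refine closure_minimal ?_ hcl hv
  intro x hx
  have := hx α ⟨hα, hαpos⟩
  rw [inner_neg_left] at this
  simp only [Set.mem_setOf_eq]
  linarith

lemma baseAlcove_nonempty (R : RootSystemData V) : R.baseAlcove.Nonempty := by
  have hfin : ((fun β : V => ⟪R.ξ, β⟫) '' R.pos).Finite :=
    (R.finite.subset fun β hβ => hβ.1).image _
  obtain ⟨c, hc⟩ := hfin.bddAbove
  have hc0 : (0:ℝ) ≤ max c 0 := le_max_right _ _
  have hpos : (0:ℝ) < max c 0 + 1 := by linarith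
  refine ⟨(1 / (max c 0 + 1)) • R.ξ, fun β hβ => ?_⟩
  have hβξ : 0 < ⟪R.ξ, β⟫ := hβ.2
  have hcb : ⟪R.ξ, β⟫ ≤ max c 0 :=
    le_trans (hc (Set.mem_image_of_mem _ hβ)) (le_max_left _ _)
  rw [real_inner_smul_left]
  refine ⟨by positivity, ?_⟩
  rw [one_div_mul_eq_div, div_lt_one hpos]
  linarith

lemma mem_sep_set (R : RootSystemData V) {α : V} (hα : α ∈ R.Φ) (j : ℤ) {S T : Set V}
    (h : ((∀ x ∈ S, ⟪x, α⟫ < (j : ℝ)) ∧ ∀ x ∈ T, (j : ℝ) < ⟪x, α⟫) ∨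
      ((∀ x ∈ T, ⟪x, α⟫ < (j : ℝ)) ∧ ∀ x ∈ S, (j : ℝ) < ⟪x, α⟫)) :
    R.hyp α j ∈ {H : Set V | R.IsHyp H ∧ R.Separates H S T} :=
  ⟨⟨α, hα, j, rfl⟩, ⟨α, hα, j, rfl, h⟩⟩

/-- For a wall `H_{α,k}` of the alcove `A`, the strip of `A` in direction `α` is adjacent
to `k`. -/
lemma wall_strip (R : RootSystemData V) {A : Set V} {α : V} (hα : α ∈ R.Φ) {k m : ℤ}
    (hd : R.dist A (reflPt α (k : ℝ) '' A) = 1)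
    (hm : ∀ x ∈ A, (m : ℝ) < ⟪x, α⟫ ∧ ⟪x, α⟫ < (m : ℝ) + 1) :
    m = k - 1 ∨ m = k := by
  have haa := R.inner_self_ne_zero' hα
  have hra : ∀ y ∈ reflPt α (k : ℝ) '' A,
      2 * (k : ℝ) - ((m : ℝ) + 1) < ⟪y, α⟫ ∧ ⟪y, α⟫ < 2 * (k : ℝ) - m := by
    rintro _ ⟨x, hx, rfl⟩
    rw [inner_reflPt_self haa]
    obtain ⟨h1, h2⟩ := hm x hx
    constructor <;> linarith
  by_contra hcon
  push_neg at hcon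
  obtain ⟨a, ha⟩ := Set.ncard_eq_one.mp hd
  have hin : ∀ j : ℤ, ((2*k - m : ℤ) ≤ j ∧ j ≤ m) ∨ ((m+1) ≤ j ∧ j ≤ 2*k - m - 1) →
      R.hyp α j = a := by
    intro j hj
    have : R.hyp α j ∈ {H : Set V | R.IsHyp H ∧ R.Separates H A (reflPt α (k : ℝ) '' A)} := by
      rcases hj with ⟨hj1, hj2⟩ | ⟨hj1, hj2⟩
      · refine R.mem_sep_set hα j (Or.inr ⟨fun y hy => ?_, fun x hx => ?_⟩)
        · have := (hra y hy).2
          have hjc : 2 * (k:ℝ) - (m:ℝ) ≤ (j:ℝ) := by exact_mod_cast hj1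
          linarith
        · have := (hm x hx).1
          have hjc : (j : ℝ) ≤ (m : ℝ) := by exact_mod_cast hj2
          linarith
      · refine R.mem_sep_set hα j (Or.inl ⟨fun x hx => ?_, fun y hy => ?_⟩)
        · have := (hm x hx).2
          have hjc : (m : ℝ) + 1 ≤ (j : ℝ) := by exact_mod_cast hj1
          linarith
        · have := (hra y hy).1
          have hjc : (j : ℝ) ≤ 2 * (k:ℝ) - (m:ℝ) - 1 := by exact_mod_cast hj2
          linarith
    rw [ha] at this
    exact this
  -- two distinct hyperplanes both equal to `a`
  have hcase : (m + 1 ≤ k - 1) ∨ (k + 1 ≤ m) := by omega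
  have hj1 : R.hyp α (k-1) = a := by
    apply hin
    rcases hcase with h | h
    · right; omega
    · left; omega
  have hj2 : R.hyp α (k+1) = a := by
    apply hin
    rcases hcase with h | h
    · right; omega
    · left; omega
  have := R.hyp_inj hα (hj1.trans hj2.symm)
  omega

/-- When the alcove `A` lies in the strip just above its wall `H_{α,k}`, the only separating
hyperplane between `A` and its reflection is `H_{α,k}` itself. -/
lemma sep_eq_singleton (R : RootSystemData V) {A : Set V} {α : V} (hα : α ∈ R.Φ) {k : ℤ}
    (hd : R.dist A (reflPt α (k : ℝ) '' A) = 1)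
    (hm : ∀ x ∈ A, (k : ℝ) < ⟪x, α⟫ ∧ ⟪x, α⟫ < (k : ℝ) + 1) :
    {H : Set V | R.IsHyp H ∧ R.Separates H A (reflPt α (k : ℝ) '' A)} = {R.hyp α k} := by
  have haa := R.inner_self_ne_zero' hα
  obtain ⟨a, ha⟩ := Set.ncard_eq_one.mp hd
  have hmem : R.hyp α k ∈ {H : Set V | R.IsHyp H ∧ R.Separates H A (reflPt α (k : ℝ) '' A)} := by
    refine R.mem_sep_set hα k (Or.inr ⟨?_, fun x hx => (hm x hx).1⟩)
    rintro _ ⟨x, hx, rfl⟩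
    rw [inner_reflPt_self haa]
    have := (hm x hx).1
    linarith
  rw [ha] at hmem ⊢
  rw [Set.mem_singleton_iff.mp hmem]

lemma continuous_reflPt (α : V) (k : ℝ) : Continuous (reflPt α k) := by
  unfold reflPt
  exact continuous_id.sub
    ((((continuous_id.inner continuous_const).sub continuous_const).mul
      continuous_const).smul continuous_const)

/-- The midpoint of a point of `A` and its reflection in the wall `H_{α,0}` lies in the
closure of `A`. -/
lemma midpoint_mem_closure (R : RootSystemData V) {A : Set V} (hA : R.IsAlcove A)
    {α : V} (hα : α ∈ R.Φ)
    (hsep : {H : Set V | R.IsHyp H ∧ R.Separates H A (reflPt α (0:ℝ) '' A)} = {R.hyp α 0})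
    (hm : ∀ x ∈ A, (0:ℝ) < ⟪x, α⟫ ∧ ⟪x, α⟫ < 1)
    {a : V} (ha : a ∈ A) :
    a - (⟪a, α⟫ / ⟪α, α⟫) • α ∈ closure A := by
  have haa := R.inner_self_ne_zero' hα
  set y : ℝ → V := fun t => a - (t * (2 * ⟪a, α⟫ / ⟪α, α⟫)) • α with hy
  have hyc : Continuous y := by
    apply continuous_const.sub
    exact (continuous_id.mul continuous_const).smul continuous_const
  have hy0 : y 0 = a := by simp [hy]
  have hyinner : ∀ t : ℝ, ∀ β : V,
      ⟪y t, β⟫ = (1 - t) * ⟪a, β⟫ + t * ⟪reflPt α 0 a, β⟫ := by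
    intro t β
    rw [hy]
    simp only []
    rw [inner_sub_left, real_inner_smul_left, inner_reflPt]
    ring
  have hαt : ∀ t : ℝ, ⟪y t, α⟫ = (1 - 2 * t) * ⟪a, α⟫ := by
    intro t
    rw [hyinner, inner_reflPt_self haa]
    ring
  have hmemc : ∀ t : ℝ, 0 < t → t < 1 / 2 → y t ∈ R.hypUnionᶜ := by
    intro t ht0 ht2
    rintro ⟨β, hβ, j, hj⟩
    by_cases hc : R.hyp β j = R.hyp α 0
    · have h1 := (hm a ha).1
      rcases R.hyp_eq_hyp hα hβ hc with ⟨hβα, hj0⟩ | ⟨hβα, hj0⟩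
      · rw [hβα, hj0, hαt] at hj
        norm_num at hj
        rcases hj with hj | hj
        · linarith
        · linarith
      · rw [hβα, hj0, inner_neg_right, hαt] at hj
        norm_num at hj
        rcases hj with hj | hj
        · linarith
        · linarith
    · have hrsub : reflPt α ((0:ℤ) : ℝ) '' A ⊆ R.hypUnionᶜ :=
        R.reflPt_image_subset hα 0 hA.subset
      simp only [Int.cast_zero] at hrsub
      have hrpre : IsPreconnected (reflPt α (0:ℝ) '' A) :=
        hA.preconnected.image _ (continuous_reflPt α 0).continuousOn
      obtain ⟨mβ, hmβ⟩ := R.strip hA.preconnected hA.subset ha hβ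
      have hrne : reflPt α (0:ℝ) a ∈ reflPt α (0:ℝ) '' A := Set.mem_image_of_mem _ ha
      obtain ⟨m'β, hm'β⟩ := R.strip hrpre hrsub hrne hβ
      have hjA : (mβ + 1 ≤ j) ∨ (j ≤ mβ) := by omega
      have hjr : (m'β + 1 ≤ j) ∨ (j ≤ m'β) := by omega
      have hAlt : (mβ + 1 ≤ j) → ∀ x ∈ A, ⟪x, β⟫ < (j : ℝ) := by
        intro h x hx
        have h1 := (hmβ x hx).2
        have h2 : (mβ : ℝ) + 1 ≤ (j : ℝ) := by exact_mod_cast h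
        linarith
      have hAgt : (j ≤ mβ) → ∀ x ∈ A, (j : ℝ) < ⟪x, β⟫ := by
        intro h x hx
        have h1 := (hmβ x hx).1
        have h2 : (j : ℝ) ≤ (mβ : ℝ) := by exact_mod_cast h
        linarith
      have hrlt : (m'β + 1 ≤ j) → ∀ x ∈ reflPt α (0:ℝ) '' A, ⟪x, β⟫ < (j : ℝ) := by
        intro h x hx
        have h1 := (hm'β x hx).2
        have h2 : (m'β : ℝ) + 1 ≤ (j : ℝ) := by exact_mod_cast h
        linarith
      have hrgt : (j ≤ m'β) → ∀ x ∈ reflPt α (0:ℝ) '' A, (j : ℝ) < ⟪x, β⟫ := by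
        intro h x hx
        have h1 := (hm'β x hx).1
        have h2 : (j : ℝ) ≤ (m'β : ℝ) := by exact_mod_cast h
        linarith
      rcases hjA with h1 | h1 <;> rcases hjr with h2 | h2
      · -- both below j : convex combination below j
        have ha1 := hAlt h1 a ha
        have ha2 := hrlt h2 _ hrne
        rw [hyinner] at hj
        nlinarith [hj.le, hj.ge]
      · -- A below, image above : separation
        exact hc (by
          have := R.mem_sep_set hβ j (S := A) (T := reflPt α (0:ℝ) '' A)
            (Or.inl ⟨hAlt h1, hrgt h2⟩)
          rwa [hsep, Set.mem_singleton_iff] at this)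
      · -- A above, image below : separation
        exact hc (by
          have := R.mem_sep_set hβ j (S := A) (T := reflPt α (0:ℝ) '' A)
            (Or.inr ⟨hrlt h2, hAgt h1⟩)
          rwa [hsep, Set.mem_singleton_iff] at this)
      · -- both above j
        have ha1 := hAgt h1 a ha
        have ha2 := hrgt h2 _ hrne
        rw [hyinner] at hj
        nlinarith [hj.le, hj.ge]
  have hytA : ∀ t : ℝ, 0 ≤ t → t < 1 / 2 → y t ∈ A := by
    intro t ht0 ht2
    obtain ⟨x₀, hx₀, hAeq⟩ := id hA
    have hAa : A = connectedComponentIn R.hypUnionᶜ a :=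
      hAeq.trans (connectedComponentIn_eq (hAeq ▸ ha))
    have hS : IsPreconnected (y '' Set.Icc 0 t) :=
      isPreconnected_Icc.image _ hyc.continuousOn
    have hsub2 : y '' Set.Icc 0 t ⊆ R.hypUnionᶜ := by
      rintro _ ⟨s, ⟨hs0, hst⟩, rfl⟩
      rcases eq_or_lt_of_le hs0 with h | h
      · rw [← h, hy0]
        exact hA.subset ha
      · exact hmemc s h (lt_of_le_of_lt hst ht2)
    have hmem0 : a ∈ y '' Set.Icc 0 t := ⟨0, ⟨le_refl 0, ht0⟩, hy0⟩
    have hsubA := hS.subset_connectedComponentIn hmem0 hsub2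
    rw [← hAa] at hsubA
    exact hsubA ⟨t, ⟨ht0, le_refl t⟩, rfl⟩
  have h12 : a - (⟪a, α⟫ / ⟪α, α⟫) • α = y (1 / 2) := by
    show a - (⟪a, α⟫ / ⟪α, α⟫) • α = a - ((1 / 2 : ℝ) * (2 * ⟪a, α⟫ / ⟪α, α⟫)) • α
    congr 2
    ring
  rw [h12]
  have hcl : (1 : ℝ) / 2 ∈ closure (Set.Ioo (0 : ℝ) (1 / 2)) := by
    rw [closure_Ioo (by norm_num : (0:ℝ) ≠ 1 / 2)]
    exact ⟨by norm_num, le_refl _⟩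
  have hmemcl := hyc.continuousWithinAt.mem_closure_image hcl
  refine closure_mono ?_ hmemcl
  rintro _ ⟨s, ⟨h1, h2⟩, rfl⟩
  exact hytA s h1.le h2

/-- If the alcove `A ⊆ C` lies in the strip just above its wall `H_{α,0}`, then `H_{α,0}` is a
wall of the chamber. -/
lemma isChamberWall_of (R : RootSystemData V) {A : Set V} (hA : R.IsAlcove A)
    (hAC : A ⊆ R.chamber) {α : V} (hα : α ∈ R.Φ) (hαpos : 0 < ⟪R.ξ, α⟫)
    (hsep : {H : Set V | R.IsHyp H ∧ R.Separates H A (reflPt α (0:ℝ) '' A)} = {R.hyp α 0})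
    (hm : ∀ x ∈ A, (0:ℝ) < ⟪x, α⟫ ∧ ⟪x, α⟫ < 1) :
    R.IsChamberWall (R.hyp α 0) := by
  have haa := R.inner_self_ne_zero' hα
  refine ⟨⟨α, hα, 0, rfl⟩, ?_, ?_⟩
  · ext x
    simp only [Set.mem_inter_iff, Set.mem_empty_iff_false, iff_false, not_and]
    intro hx1 hx2
    have h1 := hx2 α ⟨hα, hαpos⟩
    have hx1' : ⟪x, α⟫ = ((0:ℤ) : ℝ) := hx1
    rw [Int.cast_zero] at hx1'
    linarith
  · obtain ⟨a₀, ha₀⟩ := hA.nonempty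
    set S : Set V := R.hyp α 0 ∩ closure R.chamber with hS
    set m₀ : V := a₀ - (⟪a₀, α⟫ / ⟪α, α⟫) • α with hm₀
    have hm₀0 : ⟪m₀, α⟫ = 0 := by
      rw [hm₀, inner_sub_left, real_inner_smul_left, div_mul_cancel₀ _ haa, sub_self]
    have hm₀S : m₀ ∈ S := by
      refine ⟨?_, closure_mono hAC (R.midpoint_mem_closure hA hα hsep hm ha₀)⟩
      show ⟪m₀, α⟫ = ((0:ℤ) : ℝ)
      rw [Int.cast_zero]; exact hm₀0
    refine le_antisymm (affineSpan_mono ℝ Set.inter_subset_left) ?_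
    rw [affineSpan_le]
    intro h hh
    have hhα : ⟪h, α⟫ = 0 := by
      have : ⟪h, α⟫ = ((0:ℤ) : ℝ) := hh
      rwa [Int.cast_zero] at this
    set u : V := h - m₀ with hu_def
    have hu : ⟪u, α⟫ = 0 := by
      rw [hu_def, inner_sub_left, hhα, hm₀0, sub_zero]
    obtain ⟨ε, hε, hball⟩ := Metric.isOpen_iff.mp hA.isOpen a₀ ha₀
    set δ : ℝ := ε / (2 * (‖u‖ + 1)) with hδ_def
    have hδ : 0 < δ := by positivity
    have hδu : δ * ‖u‖ < ε := by
      rw [hδ_def, div_mul_eq_mul_div, div_lt_iff₀ (by positivity)]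
      nlinarith [norm_nonneg u]
    have ha' : a₀ + δ • u ∈ A := by
      apply hball
      rw [Metric.mem_ball, dist_eq_norm, add_sub_cancel_left, norm_smul,
        Real.norm_eq_abs, abs_of_pos hδ]
      exact hδu
    have hinner_a' : ⟪a₀ + δ • u, α⟫ = ⟪a₀, α⟫ := by
      rw [inner_add_left, real_inner_smul_left, hu, mul_zero, add_zero]
    have hm'S : m₀ + δ • u ∈ S := by
      constructor
      · show ⟪m₀ + δ • u, α⟫ = ((0:ℤ) : ℝ)
        rw [Int.cast_zero, inner_add_left, real_inner_smul_left, hu, hm₀0, mul_zero, add_zero]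
      · have key := R.midpoint_mem_closure hA hα hsep hm ha'
        have heq : a₀ + δ • u - (⟪a₀ + δ • u, α⟫ / ⟪α, α⟫) • α = m₀ + δ • u := by
          rw [hinner_a', hm₀]
          abel
        rw [heq] at key
        exact closure_mono hAC key
    have hmem1 := subset_affineSpan ℝ S hm'S
    have hmem0 := subset_affineSpan ℝ S hm₀S
    have hmem := (affineSpan ℝ S).smul_vsub_vadd_mem (1 / δ) hmem1 hmem0 hmem0
    have heq2 : (1 / δ) • ((m₀ + δ • u) -ᵥ m₀) +ᵥ m₀ = h := by
      rw [vsub_eq_sub, vadd_eq_add, add_sub_cancel_left, smul_smul, one_div,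
        inv_mul_cancel₀ (ne_of_gt hδ), one_smul, hu_def]
      abel
    rwa [heq2] at hmem

/-- The main lemma : `statement1` for a positively-oriented explicit wall. -/
lemma main_lemma (R : RootSystemData V) (A B : Set V) (v : V) {α : V} (hα : α ∈ R.Φ)
    (hαpos : 0 < ⟪R.ξ, α⟫) (k : ℤ)
    (hA : R.IsAlcove A) (hAC : A ⊆ R.chamber)
    (hd : R.dist A (reflPt α (k : ℝ) '' A) = 1)
    (hHnot : ¬ R.IsChamberWall (R.hyp α k))
    (hB : R.IsAlcove B) (hv : v ∈ closure B)
    (hside : R.SameSide (R.hyp α k) A R.baseAlcove)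
    (hvC : v ∈ closure R.antiChamber) :
    R.SameSide (R.hyp α k) B A := by
  obtain ⟨x₀A, hx₀A⟩ := hA.nonempty
  obtain ⟨m, hm⟩ := R.strip hA.preconnected hA.subset hx₀A hα
  have hm0 : 0 ≤ m := by
    have h1 := hAC hx₀A α ⟨hα, hαpos⟩
    have h2 := (hm x₀A hx₀A).2
    have h3 : (-1 : ℝ) < (m : ℝ) := by linarith
    have h4 : (-1 : ℤ) < m := by exact_mod_cast h3
    omega
  obtain ⟨x₁, hx₁⟩ := R.baseAlcove_nonempty
  have hx₁α := hx₁ α ⟨hα, hαpos⟩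
  have hside' := R.sameSide_transfer hα k hside
  rcases R.wall_strip hα hd hm with hmk | hmk
  · -- A lies below H, so k ≥ 1 and any alcove touching the closure of -C is below H
    subst hmk
    have hAlt : ∀ x ∈ A, ⟪x, α⟫ < (k : ℝ) := by
      intro x hx
      have h1 := (hm x hx).2
      push_cast at h1
      linarith
    have hbr : ∀ x ∈ A ∪ R.baseAlcove, ⟪x, α⟫ < (k : ℝ) := by
      rcases hside' with h | h
      · exact h
      · exact absurd (h x₀A (Or.inl hx₀A)) (not_lt.mpr (hAlt x₀A hx₀A).le)
    have hk1 : 1 ≤ k := by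
      have h1 := hbr x₁ (Or.inr hx₁)
      have h2 : (0 : ℝ) < (k : ℝ) := lt_trans hx₁α.1 h1
      have h3 : (0 : ℤ) < k := by exact_mod_cast h2
      omega
    obtain ⟨x₀B, hx₀B⟩ := hB.nonempty
    obtain ⟨m', hm'⟩ := R.strip hB.preconnected hB.subset hx₀B hα
    have hvα := R.antiChamber_closure_nonpos hα hαpos hvC
    have hvm : (m' : ℝ) ≤ ⟪v, α⟫ := by
      have hcl : IsClosed {x : V | (m' : ℝ) ≤ ⟪x, α⟫} :=
        isClosed_le continuous_const (continuous_id.inner continuous_const)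
      exact closure_minimal (fun x hx => (hm' x hx).1.le) hcl hv
    have hm'0 : m' ≤ 0 := by
      have : (m' : ℝ) ≤ 0 := le_trans hvm hvα
      exact_mod_cast this
    refine ⟨α, hα, k, rfl, Or.inl ?_⟩
    rintro x (hx | hx)
    · have h1 := (hm' x hx).2
      have h2 : m' + 1 ≤ k := by omega
      have h3 : (m' : ℝ) + 1 ≤ (k : ℝ) := by exact_mod_cast h2
      linarith
    · exact hAlt x hx
  · -- A lies above H, so k = 0 and H is a chamber wall : contradiction
    rw [hmk] at hm hm0
    have hAgt : ∀ x ∈ A, (k : ℝ) < ⟪x, α⟫ := fun x hx => (hm x hx).1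
    have hbr : ∀ x ∈ A ∪ R.baseAlcove, (k : ℝ) < ⟪x, α⟫ := by
      rcases hside' with h | h
      · exact absurd (h x₀A (Or.inl hx₀A)) (not_lt.mpr (hAgt x₀A hx₀A).le)
      · exact h
    have hk0 : k = 0 := by
      have h1 := hbr x₁ (Or.inr hx₁)
      have h2 : (k : ℝ) < 1 := lt_trans h1 hx₁α.2
      have h3 : k < 1 := by exact_mod_cast h2
      omega
    subst hk0
    exfalso
    apply hHnot
    have hm1 : ∀ x ∈ A, (0:ℝ) < ⟪x, α⟫ ∧ ⟪x, α⟫ < 1 := by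
      intro x hx
      have h1 := hm x hx
      push_cast at h1
      exact ⟨h1.1, by linarith [h1.2]⟩
    have hsep := R.sep_eq_singleton hα hd hm
    simp only [Int.cast_zero] at hsep
    exact R.isChamberWall_of hA hAC hα hαpos hsep hm1

end RootSystemData

end Auxiliary

/-- if the alcove `A ⊆ C` and the base alcove lie in the same open half-space of a
wall `H` of `A` which is not a wall of `C`, and `v ∈ closure B ∩ closure (−C)`, then the alcove
`B` lies in the same open half-space of `H` as `A`. -/
theorem statement1 {V : Type*} [NormedAddCommGroup V] [InnerProductSpace ℝ V]
    [FiniteDimensional ℝ V] (R : RootSystemData V) (A H B : Set V) (v : V)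
    (hA : R.IsAlcove A) (hAC : A ⊆ R.chamber)
    (hH : R.IsWall H A) (hHnot : ¬ R.IsChamberWall H)
    (hB : R.IsAlcove B) (hv : v ∈ closure B)
    (hside : R.SameSide H A R.baseAlcove)
    (hvC : v ∈ closure R.antiChamber) :
    R.SameSide H B A := by
  obtain ⟨α₀, hα₀, k₀, hHeq, hd⟩ := hH
  subst hHeq
  rcases lt_trichotomy (0:ℝ) ⟪R.ξ, α₀⟫ with hpos | heq | hneg
  · exact R.main_lemma A B v hα₀ hpos k₀ hA hAC hd hHnot hB hv hside hvC
  · exact absurd heq.symm (R.regular α₀ hα₀)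
  · have hα' : -α₀ ∈ R.Φ := R.neg_mem hα₀
    have hpos' : 0 < ⟪R.ξ, -α₀⟫ := by rw [inner_neg_right]; linarith
    have hHeq' : R.hyp α₀ k₀ = R.hyp (-α₀) (-k₀) := (R.hyp_neg α₀ k₀).symm
    have hrefl : reflPt (-α₀) ((-k₀ : ℤ) : ℝ) '' A = reflPt α₀ ((k₀ : ℤ) : ℝ) '' A := by
      apply Set.image_congr
      intro x _
      rw [show ((-k₀ : ℤ) : ℝ) = -((k₀ : ℤ) : ℝ) by push_cast; ring]
      exact RootSystemData.reflPt_neg α₀ ((k₀ : ℤ) : ℝ) x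
    rw [hHeq'] at hHnot hside ⊢
    apply R.main_lemma A B v hα' hpos' (-k₀) hA hAC ?_ hHnot hB hv hside hvC
    rw [hrefl]
    exact hd
end

section
/- Let v be a special point with v ∈ closure(−C) and let u ∈ W₀. Set D := v + u(C), a Weyl chamber at v. Then either D ∩ C = ∅ or C ⊆ D. -/
open RealInnerProductSpace

section Aux

variable {V : Type*} [NormedAddCommGroup V] [InnerProductSpace ℝ V]

lemma RootSystemData.neg_mem_s2 (R : RootSystemData V) {α : V} (hα : α ∈ R.Φ) : -α ∈ R.Φ := by
  have h := R.reflect_mem α hα α hα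
  have hne : ⟪α, α⟫ ≠ (0 : ℝ) := fun h0 =>
    R.nonzero α hα (inner_self_eq_zero.mp h0)
  have : (2 * ⟪α, α⟫ / ⟪α, α⟫ : ℝ) = 2 := by field_simp
  rw [this] at h
  have h2 : α - (2 : ℝ) • α = -α := by
    rw [two_smul]; abel
  rwa [h2] at h

lemma RootSystemData.w0_maps (R : RootSystemData V) (u : V ≃ₗᵢ[ℝ] V) (hu : u ∈ R.W0) :
    ⇑u '' R.Φ = R.Φ := by
  have key : ∀ f : V ≃ₗᵢ[ℝ] V, (⇑f '' R.Φ ⊆ R.Φ) → ⇑f '' R.Φ = R.Φ := by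
    intro f hf
    refine Set.eq_of_subset_of_ncard_le hf ?_ R.finite
    rw [Set.ncard_image_of_injective _ f.injective]
  refine Subgroup.closure_induction (p := fun (f : V ≃ₗᵢ[ℝ] V) _ => ⇑f '' R.Φ = R.Φ) ?_ ?_ ?_ ?_ hu
  · rintro f ⟨α, hα, hfα⟩
    refine key f ?_
    rintro _ ⟨β, hβ, rfl⟩
    rw [hfα β]
    have h := R.reflect_mem α hα β hβ
    have : reflPt α 0 β = β - (2 * ⟪β, α⟫ / ⟪α, α⟫) • α := by
      unfold reflPt
      congr 1
      congr 1
      ring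
    rwa [this]
  · simp
  · intro f g _ _ hf hg
    have : ⇑(f * g) = ⇑f ∘ ⇑g := rfl
    rw [this, Set.image_comp, hg, hf]
  · intro f _ hf
    have : ⇑f⁻¹ '' (⇑f '' R.Φ) = R.Φ := by
      rw [← Set.image_comp]
      have : ⇑f⁻¹ ∘ ⇑f = id := by
        funext x
        exact f.symm_apply_apply x
      rw [this, Set.image_id]
    rw [hf] at this
    exact this

lemma RootSystemData.closure_anti (R : RootSystemData V) {v : V}
    (hv : v ∈ closure R.antiChamber) {α : V} (hα : α ∈ R.pos) : ⟪v, α⟫ ≤ (0 : ℝ) := by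
  have hcl : closure R.antiChamber ⊆ {x : V | ⟪x, α⟫ ≤ 0} := by
    refine closure_minimal ?_ (isClosed_le (Continuous.inner continuous_id continuous_const)
      continuous_const)
    intro x hx
    have h := hx α hα
    simp only [inner_neg_left] at h
    simp only [Set.mem_setOf_eq]
    linarith
  exact hcl hv

end Aux

/-- if `v` is a special point with `v ∈ closure (−C)`, `u ∈ W₀` and
`D = v + u(C)`, then either `D ∩ C = ∅` or `C ⊆ D`. -/


theorem statement2 {V : Type*} [NormedAddCommGroup V] [InnerProductSpace ℝ V]
    [FiniteDimensional ℝ V] (R : RootSystemData V) (v : V) (hv : R.IsSpecial v)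
    (hvC : v ∈ closure R.antiChamber) (u : V ≃ₗᵢ[ℝ] V) (hu : u ∈ R.W0) :
    ((fun x => v + u x) '' R.chamber) ∩ R.chamber = ∅ ∨
      R.chamber ⊆ (fun x => v + u x) '' R.chamber := by
  rcases eq_or_ne (((fun x => v + u x) '' R.chamber) ∩ R.chamber) ∅ with h | h
  · exact Or.inl h
  right
  obtain ⟨x₀, ⟨c₀, hc₀, hx₀eq⟩, hx₀C⟩ := Set.nonempty_iff_ne_empty.mpr h
  have huΦ : ∀ α ∈ R.Φ, u α ∈ R.Φ := by
    intro α hα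
    rw [← R.w0_maps u hu]
    exact ⟨α, hα, rfl⟩
  -- key: for each positive root α, u α is positive and ⟪v, u α⟫ ≤ 0
  have key : ∀ α ∈ R.pos, u α ∈ R.pos ∧ ⟪v, u α⟫ ≤ (0 : ℝ) := by
    intro α hα
    have hαΦ : α ∈ R.Φ := hα.1
    have huαΦ : u α ∈ R.Φ := huΦ α hαΦ
    have hreg := R.regular (u α) huαΦ
    rcases lt_or_gt_of_ne hreg with hneg | hpos
    · -- then -(u α) is a positive root; derive a contradiction using x₀
      exfalso
      have hnegpos : -(u α) ∈ R.pos := ⟨R.neg_mem_s2 huαΦ, by rwa [inner_neg_right, neg_pos]⟩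
      have h1 : 0 < ⟪x₀, -(u α)⟫ := hx₀C _ hnegpos
      have h2 : ⟪v, -(u α)⟫ ≤ 0 := R.closure_anti hvC hnegpos
      have h3 : ⟪x₀, u α⟫ = ⟪v, u α⟫ + ⟪c₀, α⟫ := by
        rw [← hx₀eq]
        rw [inner_add_left]
        congr 1
        exact u.inner_map_map c₀ α
      have h4 : 0 < ⟪c₀, α⟫ := hc₀ α hα
      rw [inner_neg_right] at h1 h2
      linarith
    · refine ⟨⟨huαΦ, hpos⟩, R.closure_anti hvC ⟨huαΦ, hpos⟩⟩
  -- conclude C ⊆ D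
  intro x hx
  refine ⟨u.symm (x - v), ?_, ?_⟩
  · intro α hα
    obtain ⟨hpos, hvle⟩ := key α hα
    have h1 : ⟪u.symm (x - v), α⟫ = ⟪x - v, u α⟫ := by
      conv_rhs => rw [← u.apply_symm_apply (x - v)]
      exact (u.inner_map_map (u.symm (x - v)) α).symm
    rw [h1, inner_sub_left]
    have := hx (u α) hpos
    linarith
  · simp
end

section
/- Let μ belong to the ℤ-span of the coroots {α∨ : α ∈ Φ} and suppose μ ∈ C. Then for every R ∈ ℕ there exists N₀ ∈ ℕ such that for all N ≥ N₀ and every alcove B with d(Nμ + A₀, B) ≤ R, one has B ⊆ C. (Here Nμ + A₀, the translate of the base alcove by Nμ, is again an alcove.) -/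
open RealInnerProductSpace

section Aux

open RealInnerProductSpace

variable {V : Type*} [NormedAddCommGroup V] [InnerProductSpace ℝ V]

/-- The set of separating hyperplanes between two nonempty sets is finite. -/
lemma sep_finite (R : RootSystemData V) {A B : Set V} {a b : V} (ha : a ∈ A) (hb : b ∈ B) :
    {H : Set V | R.IsHyp H ∧ R.Separates H A B}.Finite := by
  have hsub : {H : Set V | R.IsHyp H ∧ R.Separates H A B} ⊆
      ⋃ α ∈ R.Φ, (fun k : ℤ => R.hyp α k) ''
        (Set.Icc ⌈min ⟪a, α⟫ ⟪b, α⟫⌉ ⌊max ⟪a, α⟫ ⟪b, α⟫⌋) := by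
    rintro H ⟨-, α, hα, k, rfl, hsep⟩
    refine Set.mem_biUnion hα ⟨k, ?_, rfl⟩
    rcases hsep with ⟨h1, h2⟩ | ⟨h1, h2⟩
    · have ha' := h1 a ha
      have hb' := h2 b hb
      exact ⟨Int.ceil_le.2 (le_trans (min_le_left _ _) ha'.le),
        Int.le_floor.2 (le_trans hb'.le (le_max_right _ _))⟩
    · have hb' := h1 b hb
      have ha' := h2 a ha
      exact ⟨Int.ceil_le.2 (le_trans (min_le_right _ _) hb'.le),
        Int.le_floor.2 (le_trans ha'.le (le_max_left _ _))⟩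
  exact Set.Finite.subset
    (Set.Finite.biUnion R.finite fun α _ => (Set.finite_Icc _ _).image _) hsub

end Aux

/-- if `μ` lies in the ℤ-span of the coroots and `μ ∈ C`, then for every `R ∈ ℕ`
all alcoves within distance `R` of `Nμ + A₀` are contained in `C`, for all sufficiently
large `N`. -/
theorem statement4 {V : Type*} [NormedAddCommGroup V] [InnerProductSpace ℝ V]
    [FiniteDimensional ℝ V] (R : RootSystemData V) (μ : V)
    (hμ : μ ∈ Submodule.span ℤ {w : V | ∃ α ∈ R.Φ, w = (2 / ⟪α, α⟫) • α})
    (hμC : μ ∈ R.chamber) :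
    ∀ Rad : ℕ, ∃ N₀ : ℕ, ∀ N ≥ N₀, ∀ B : Set V, R.IsAlcove B →
      R.dist ((fun x => (N : ℝ) • μ + x) '' R.baseAlcove) B ≤ Rad → B ⊆ R.chamber := by
  classical
  -- μ has integer inner products with all roots
  have hZ : ∀ α ∈ R.Φ, ∃ n : ℤ, ⟪μ, α⟫ = (n : ℝ) := by
    intro α hα
    refine Submodule.span_induction (p := fun x _ => ∃ n : ℤ, ⟪x, α⟫ = (n : ℝ))
      ?_ ⟨0, by simp⟩ ?_ ?_ hμ
    · rintro w ⟨β, hβ, rfl⟩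
      obtain ⟨n, hn⟩ := R.crystallographic β hβ α hα
      refine ⟨n, ?_⟩
      have hc : ⟪β, α⟫ = ⟪α, β⟫ := real_inner_comm _ _
      rw [real_inner_smul_left, hc, ← hn]
      ring
    · rintro x y hx hy ⟨n, hn⟩ ⟨m, hm⟩
      exact ⟨n + m, by rw [inner_add_left, hn, hm]; push_cast; ring⟩
    · rintro c x hx ⟨n, hn⟩
      refine ⟨c * n, ?_⟩
      rw [← Int.cast_smul_eq_zsmul ℝ, real_inner_smul_left, hn]
      push_cast; ring
  -- base alcove is nonempty
  have hA0 : R.baseAlcove.Nonempty := by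
    obtain ⟨c, hc⟩ := (R.finite.subset (fun α hα => hα.1) :
        (R.pos : Set V).Finite).image (fun α => ⟪μ, α⟫) |>.bddAbove
    refine ⟨(1 / (max c 1 + 1)) • μ, fun α hα => ?_⟩
    have hcpos : (0 : ℝ) < max c 1 + 1 := by positivity
    have hμα : 0 < ⟪μ, α⟫ := hμC α hα
    have hle : ⟪μ, α⟫ ≤ max c 1 := le_trans (hc ⟨α, hα, rfl⟩) (le_max_left _ _)
    rw [real_inner_smul_left]
    constructor
    · positivity
    · rw [div_mul_eq_mul_div, one_mul, div_lt_one hcpos]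
      linarith
  obtain ⟨a0, ha0⟩ := hA0
  intro Rad
  refine ⟨Rad + 1, fun N hN B hB hd => ?_⟩
  obtain ⟨x, hx, hBx⟩ := hB
  set A : Set V := (fun x => (N : ℝ) • μ + x) '' R.baseAlcove with hAdef
  have haA : ((N : ℝ) • μ + a0) ∈ A := ⟨a0, ha0, rfl⟩
  have hxB : x ∈ B := hBx ▸ mem_connectedComponentIn hx
  intro b hbB α hα
  by_contra hneg
  push_neg at hneg
  have hBsub : B ⊆ R.hypUnionᶜ := hBx ▸ connectedComponentIn_subset _ _
  -- no point of B has integer inner product with α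
  have hBnotint : ∀ y ∈ B, ∀ k : ℤ, ⟪y, α⟫ ≠ (k : ℝ) := by
    intro y hy k hk
    exact hBsub hy ⟨α, hα.1, k, hk⟩
  have hblt : ⟪b, α⟫ < 0 :=
    lt_of_le_of_ne hneg (by simpa using hBnotint b hbB 0)
  -- all of B is on the negative side of H_{α,0}
  have hBneg : ∀ y ∈ B, ⟪y, α⟫ < 0 := by
    intro y hy
    by_contra hpos
    push_neg at hpos
    have hypos : 0 < ⟪y, α⟫ :=
      lt_of_le_of_ne hpos (fun h => hBnotint y hy 0 (by simpa using h.symm))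
    have hconn : IsPreconnected ((fun z => ⟪z, α⟫) '' B) := by
      rw [hBx]
      exact isPreconnected_connectedComponentIn.image _
        ((continuous_id.inner continuous_const).continuousOn)
    have h0 : (0 : ℝ) ∈ (fun z => ⟪z, α⟫) '' B :=
      hconn.Icc_subset ⟨b, hbB, rfl⟩ ⟨y, hy, rfl⟩ ⟨hblt.le, hypos.le⟩
    obtain ⟨z, hz, hz0⟩ := h0
    exact hBnotint z hz 0 (by simpa using hz0)
  -- ⟪μ, α⟫ ≥ 1
  have hμα : (1 : ℝ) ≤ ⟪μ, α⟫ := by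
    obtain ⟨n, hn⟩ := hZ α hα.1
    have : (0 : ℝ) < (n : ℝ) := hn ▸ hμC α hα
    have : (1 : ℤ) ≤ n := by exact_mod_cast this
    rw [hn]; exact_mod_cast this
  -- each H_{α,k}, 0 ≤ k ≤ Rad, separates A from B
  set S : Set (Set V) := {H : Set V | R.IsHyp H ∧ R.Separates H A B} with hSdef
  have hTsub : (fun k : ℤ => R.hyp α k) '' (Set.Icc 0 (Rad : ℤ)) ⊆ S := by
    rintro H ⟨k, ⟨hk0, hkR⟩, rfl⟩
    refine ⟨⟨α, hα.1, k, rfl⟩, α, hα.1, k, rfl, Or.inr ⟨?_, ?_⟩⟩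
    · intro y hy
      calc ⟪y, α⟫ < 0 := hBneg y hy
        _ ≤ (k : ℝ) := by exact_mod_cast hk0
    · rintro y ⟨a, ha, rfl⟩
      have h1 : 0 < ⟪a, α⟫ := (ha α hα).1
      have h2 : (k : ℝ) < (N : ℝ) := by
        have : (k : ℝ) ≤ (Rad : ℝ) := by exact_mod_cast hkR
        have : (Rad : ℝ) < (N : ℝ) := by exact_mod_cast Nat.lt_of_lt_of_le (Nat.lt_succ_self _) hN
        linarith [ (show (k:ℝ) ≤ (Rad:ℝ) by exact_mod_cast hkR) ]
      have h3 : (N : ℝ) ≤ (N : ℝ) * ⟪μ, α⟫ := le_mul_of_one_le_right (Nat.cast_nonneg N) hμα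
      rw [inner_add_left, real_inner_smul_left]
      linarith
  have hSfin : S.Finite := sep_finite R haA hxB
  have hinj : Set.InjOn (fun k : ℤ => R.hyp α k) (Set.Icc 0 (Rad : ℤ)) := by
    intro k _ k' _ hkk'
    have hαα : ⟪α, α⟫ ≠ (0 : ℝ) :=
      inner_self_ne_zero.2 (R.nonzero α hα.1)
    have hp : (((k : ℝ) / ⟪α, α⟫) • α) ∈ R.hyp α k := by
      show ⟪_, α⟫ = _
      rw [real_inner_smul_left, div_mul_cancel₀ _ hαα]
    have hp' : (((k : ℝ) / ⟪α, α⟫) • α) ∈ R.hyp α k' :=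
      (show R.hyp α k = R.hyp α k' from hkk') ▸ hp
    have e1 : ⟪((k : ℝ) / ⟪α, α⟫) • α, α⟫ = (k : ℝ) := hp
    have e2 : ⟪((k : ℝ) / ⟪α, α⟫) • α, α⟫ = (k' : ℝ) := hp'
    exact_mod_cast e1.symm.trans e2
  have hcard : Rad + 1 ≤ S.ncard := by
    have h1 : ((fun k : ℤ => R.hyp α k) '' (Set.Icc 0 (Rad : ℤ))).ncard = Rad + 1 := by
      rw [Set.ncard_image_of_injOn hinj, ← Finset.coe_Icc, Set.ncard_coe_finset,
        Int.card_Icc]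
      simp
    calc Rad + 1 = _ := h1.symm
      _ ≤ S.ncard := Set.ncard_le_ncard hTsub hSfin
  have : S.ncard ≤ Rad := hd
  omega
end
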